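/- Let P and Q be consistent connections with S1(P) = S1(Q) and S2(P) = S2(Q). If for every consistent connection R having Q as a subconnection, replacing Q by P yields a consistent connection R' with dep(R) ≤ dep(R') ≤ arr(R') ≤ arr(R), then P dominates Q. -/

import Mathlib

/-- A timetable: stations, stop events, minimum transfer times, and for each stop
event the (daily, hence time-independent) residence times: between the previous
arrival and the departure of the stop event (`resD`, `none` if the train begins
there) and between the arrival and the next departure (`resA`, `none` if the
train ends there). -/
structure Timetable where
  Station : Type
  StopEvent : Type
  /-- minimum transfer time at a station -/
  transfer : Station → ℕ
  /-- residence time between previous arrival and departure of a stop event -/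
  resD : StopEvent → Option ℕ
  /-- residence time between arrival and next departure of a stop event -/
  resA : StopEvent → Option ℕ

/-- `cycleDiff t t'` is the smallest nonnegative `ℓ` with `ℓ ≡ t' - t (mod 1440)`. -/
def cycleDiff (t t' : ℕ) : ℕ := (t' + 1440 - t) % 1440

/-- An elementary connection `c = (Z1, Z2, S1, S2, t_d, t_a)`. -/
structure EC (T : Timetable) where
  Z1 : T.StopEvent
  Z2 : T.StopEvent
  St1 : T.Station
  St2 : T.Station
  td : ℕ
  ta : ℕ
  htd : td ≤ 1439
  hta : ta ≤ 1439

/-- The length of an elementary connection. -/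
def EC.len {T : Timetable} (c : EC T) : ℕ := cycleDiff c.td c.ta

/-- A leg of a connection: an elementary connection together with its actual
departure and arrival times (minutes from the first day). -/
structure Leg (T : Timetable) where
  c : EC T
  dep : ℤ
  arr : ℤ

/-- A connection: a nonempty sequence of legs. -/
structure Conn (T : Timetable) where
  legs : List (Leg T)
  ne : legs ≠ []

namespace Conn

variable {T : Timetable}

/-- departure time `dep(P) = dep_1(P)` -/
def dep (P : Conn T) : ℤ := (P.legs.head P.ne).dep
/-- arrival time `arr(P) = arr_k(P)` -/
def arr (P : Conn T) : ℤ := (P.legs.getLast P.ne).arr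
/-- departure station -/
def S1 (P : Conn T) : T.Station := (P.legs.head P.ne).c.St1
/-- arrival station -/
def S2 (P : Conn T) : T.Station := (P.legs.getLast P.ne).c.St2
/-- departure stop event -/
def Z1 (P : Conn T) : T.StopEvent := (P.legs.head P.ne).c.Z1
/-- arrival stop event -/
def Z2 (P : Conn T) : T.StopEvent := (P.legs.getLast P.ne).c.Z2

/-- Shift all times of a connection by `t` minutes (e.g. the daily copy of a
daily operating connection, `t = a * 1440`). -/
def shift (P : Conn T) (t : ℤ) : Conn T :=
  ⟨P.legs.map (fun l => ⟨l.c, l.dep + t, l.arr + t⟩), by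
    have := P.ne; simp_all⟩

/-- Concatenation of two connections (the second appended after the first,
keeping all given times). -/
def concat (P Q : Conn T) : Conn T :=
  ⟨P.legs ++ Q.legs, by have := P.ne; simp_all⟩

end Conn

/-- Conditions on a single leg of a consistent connection: the departure time is
nonnegative, agrees with the timetabled departure time modulo 1440, and the
arrival time is the departure time plus the length. -/
def LegOK {T : Timetable} (l : Leg T) : Prop :=
  0 ≤ l.dep ∧ l.dep % 1440 = (l.c.td : ℤ) ∧ l.arr = l.dep + (l.c.len : ℤ)

/-- Conditions on two consecutive legs of a consistent connection: stations
match, and waiting respects the minimum transfer time unless it is the same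
train (same stop event). -/
def AdjOK (T : Timetable) (l l' : Leg T) : Prop :=
  l.c.St2 = l'.c.St1 ∧
  (l'.c.Z1 = l.c.Z2 → l.arr ≤ l'.dep) ∧
  (l'.c.Z1 ≠ l.c.Z2 → l.arr + (T.transfer l.c.St2 : ℤ) ≤ l'.dep)

/-- A connection is consistent. -/
def Consistent (T : Timetable) (P : Conn T) : Prop :=
  (∀ l ∈ P.legs, LegOK l) ∧ P.legs.Chain' (AdjOK T)

/-- `parr(P)`: previous arrival time of the stop event `Z1(P)`, or `none` if the
train begins there. -/
def parr (T : Timetable) (P : Conn T) : Option ℤ :=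
  (T.resD P.Z1).map (fun r => P.dep - (r : ℤ))

/-- `ndep(P)`: next departure time of the stop event `Z2(P)`, or `none` if the
train ends there. -/
def ndep (T : Timetable) (P : Conn T) : Option ℤ :=
  (T.resA P.Z2).map (fun r => P.arr + (r : ℤ))

/-- `P` is a critical departure: `parr(P) ≠ ⊥` and
`dep(P) - parr(P) < transfer(S1(P))`. -/
def CriticalDep (T : Timetable) (P : Conn T) : Prop :=
  ∃ t, parr T P = some t ∧ P.dep - t < (T.transfer P.S1 : ℤ)

/-- `P` is a critical arrival: `ndep(P) ≠ ⊥` and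
`ndep(P) - arr(P) < transfer(S2(P))`. -/
def CriticalArr (T : Timetable) (P : Conn T) : Prop :=
  ∃ t, ndep T P = some t ∧ t - P.arr < (T.transfer P.S2 : ℤ)

/-- Domination between connections. -/
def Dominates (T : Timetable) (P Q : Conn T) : Prop :=
  (P.S1 = Q.S1 ∧ P.S2 = Q.S2) ∧
  (Q.dep ≤ P.dep ∧ P.arr ≤ Q.arr) ∧
  (Q.Z1 = P.Z1 ∨ ¬ CriticalDep T Q ∨
    ∀ t, parr T Q = some t → (T.transfer P.S1 : ℤ) ≤ P.dep - t) ∧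
  (Q.Z2 = P.Z2 ∨ ¬ CriticalArr T Q ∨
    ∀ t, ndep T Q = some t → (T.transfer P.S2 : ℤ) ≤ t - P.arr)

/-- Domination between arrival connections. -/
def ADominates (T : Timetable) (P Q : Conn T) : Prop :=
  P.S2 = Q.S2 ∧ P.arr ≤ Q.arr ∧
  (Q.Z2 = P.Z2 ∨ ¬ CriticalArr T Q ∨
    ∀ t, ndep T Q = some t → (T.transfer P.S2 : ℤ) ≤ t - P.arr)

/-- A consistent arrival connection w.r.t. a time query with departure station
`A` and departure time `t0`: a consistent connection departing from `A` not
before `t0`. -/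
def IsArrConn (T : Timetable) (A : T.Station) (t0 : ℤ) (P : Conn T) : Prop :=
  Consistent T P ∧ P.S1 = A ∧ t0 ≤ P.dep

/-- The connection obtained from a connection `R = pre ++ Q ++ suf` (with `Q` a
subconnection) by replacing `Q` by `P`. -/
def replaced (T : Timetable) (pre suf : List (Leg T)) (P : Conn T) : Conn T :=
  ⟨pre ++ P.legs ++ suf, by have := P.ne; simp_all⟩

/-- Let `P` and `Q` be consistent connections between the same
stations. If for every consistent connection `R` having `Q` as a subconnection,
replacing `Q` by `P` yields a consistent connection `R'` with
`dep(R) ≤ dep(R') ≤ arr(R') ≤ arr(R)`, then `P` dominates `Q`. -/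

private lemma conn_arr_congr {T : Timetable} {L L' : List (Leg T)} (h : L ≠ []) (h' : L' ≠ [])
    (e : L = L') : (Conn.mk L h).arr = (Conn.mk L' h').arr := by subst e; rfl

private lemma conn_dep_congr {T : Timetable} {L L' : List (Leg T)} (h : L ≠ []) (h' : L' ≠ [])
    (e : L = L') : (Conn.mk L h).dep = (Conn.mk L' h').dep := by subst e; rfl

theorem replaceable_dominates (T : Timetable) (P Q : Conn T)
    (hP : Consistent T P) (hQ : Consistent T Q)
    (hS1 : P.S1 = Q.S1) (hS2 : P.S2 = Q.S2)
    (hrep : ∀ pre suf : List (Leg T),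
      Consistent T (replaced T pre suf Q) →
        Consistent T (replaced T pre suf P) ∧
        (replaced T pre suf Q).dep ≤ (replaced T pre suf P).dep ∧
        (replaced T pre suf P).dep ≤ (replaced T pre suf P).arr ∧
        (replaced T pre suf P).arr ≤ (replaced T pre suf Q).arr) :
    Dominates T P Q := by
  obtain ⟨Pl, Pne⟩ := P
  obtain ⟨p0, pt, rfl⟩ := List.exists_cons_of_ne_nil Pne
  obtain ⟨Ql, Qne⟩ := Q
  obtain ⟨q0, qt, rfl⟩ := List.exists_cons_of_ne_nil Qne
  -- basic facts
  have hQdep0 : (0:ℤ) ≤ q0.dep := (hQ.1 q0 (by simp)).1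
  set qlast : Leg T := (q0 :: qt).getLast (by simp) with hqlast
  have hqmem : qlast ∈ q0 :: qt := List.getLast_mem _
  have hQarr0 : (0:ℤ) ≤ qlast.arr := by
    obtain ⟨h1, h2, h3⟩ := hQ.1 qlast hqmem
    have : (0:ℤ) ≤ (qlast.c.len : ℤ) := Int.ofNat_nonneg _
    omega
  -- Part (2): empty pre and suf
  have hQ0 : Consistent T (replaced T [] [] ⟨q0 :: qt, Qne⟩) := by
    simpa [Consistent, replaced] using hQ
  obtain ⟨_, hd1, _, ha1⟩ := hrep [] [] hQ0
  have hdep2 : (⟨q0 :: qt, Qne⟩ : Conn T).dep ≤ (⟨p0 :: pt, Pne⟩ : Conn T).dep := by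
    have e1 := conn_dep_congr (L := [] ++ ((q0:: qt) ++ [])) (L' := q0 :: qt)
      (by simp) Qne (by simp)
    have e2 := conn_dep_congr (L := [] ++ ((p0:: pt) ++ [])) (L' := p0 :: pt)
      (by simp) Pne (by simp)
    calc (⟨q0 :: qt, Qne⟩ : Conn T).dep = (replaced T [] [] ⟨q0 :: qt, Qne⟩).dep := e1.symm
      _ ≤ (replaced T [] [] ⟨p0 :: pt, Pne⟩).dep := hd1
      _ = _ := e2
  have harr2 : (⟨p0 :: pt, Pne⟩ : Conn T).arr ≤ (⟨q0 :: qt, Qne⟩ : Conn T).arr := by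
    have e1 := conn_arr_congr (L := [] ++ ((q0:: qt) ++ [])) (L' := q0 :: qt)
      (by simp) Qne (by simp)
    have e2 := conn_arr_congr (L := [] ++ ((p0:: pt) ++ [])) (L' := p0 :: pt)
      (by simp) Pne (by simp)
    calc (⟨p0 :: pt, Pne⟩ : Conn T).arr = (replaced T [] [] ⟨p0 :: pt, Pne⟩).arr := e2.symm
      _ ≤ (replaced T [] [] ⟨q0 :: qt, Qne⟩).arr := ha1
      _ = _ := e1
  refine ⟨⟨hS1, hS2⟩, ⟨hdep2, harr2⟩, ?_, ?_⟩
  -- Part (3): departure criterion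
  · by_cases hz : q0.c.Z1 = p0.c.Z1
    · exact Or.inl hz
    · refine Or.inr (Or.inr ?_)
      intro t ht
      rw [parr] at ht
      obtain ⟨r, hr, hrt⟩ := Option.map_eq_some_iff.mp ht
      have hr0 : (0:ℤ) ≤ r := by
        rcases h : T.resD (⟨q0 :: qt, Qne⟩ : Conn T).Z1 with _ | n
        · rw [h] at hr; simp at hr
        · rw [h] at hr; simp at hr; omega
      have htq : t = q0.dep - r := hrt.symm
      set a : ℤ := max t 0 with ha
      have ha0 : 0 ≤ a := le_max_right _ _
      have hat : t ≤ a := le_max_left _ _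
      have hta : a ≤ q0.dep := max_le (by omega) hQdep0
      clear_value a
      have hm0 : 0 ≤ a % 1440 := Int.emod_nonneg a (by norm_num)
      have hm1 : a % 1440 < 1440 := Int.emod_lt_of_pos a (by norm_num)
      set e : EC T := ⟨q0.c.Z1, q0.c.Z1, q0.c.St1, q0.c.St1,
        (a % 1440).toNat, (a % 1440).toNat, by omega, by omega⟩ with he
      have hlen : e.len = 0 := by
        simp only [EC.len, cycleDiff, he, Nat.add_sub_cancel_left, Nat.mod_self]
      set l : Leg T := ⟨e, a, a⟩ with hl
      have hlok : LegOK l := by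
        refine ⟨ha0, ?_, ?_⟩
        · show a % 1440 = ((a % 1440).toNat : ℤ)
          omega
        · show a = a + (e.len : ℤ)
          rw [hlen]; simp
      have hconsQ : Consistent T (replaced T [l] [] ⟨q0 :: qt, Qne⟩) := by
        constructor
        · intro x hx
          simp only [replaced, List.cons_append, List.nil_append, List.append_nil,
            List.mem_cons] at hx
          rcases hx with h | h
          · exact h ▸ hlok
          · exact hQ.1 x (by simp [h])
        · have hch : (replaced T [l] [] ⟨q0 :: qt, Qne⟩).legs = l :: q0 :: qt := by
            simp [replaced]
          rw [hch, List.Chain', List.isChain_cons_cons]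
          refine ⟨⟨rfl, fun _ => hta, fun h => absurd rfl h⟩, hQ.2⟩
      obtain ⟨hconsP, -, -, -⟩ := hrep [l] [] hconsQ
      have hch : List.Chain' (AdjOK T) (l :: p0 :: pt) := by
        have := hconsP.2
        simpa [replaced] using this
      have hadj : AdjOK T l p0 := (List.isChain_cons_cons.mp hch).1
      have hne : p0.c.Z1 ≠ l.c.Z2 := fun h => hz h.symm
      have hkey : l.arr + (T.transfer l.c.St2 : ℤ) ≤ p0.dep := hadj.2.2 hne
      have hst : l.c.St2 = p0.c.St1 := hS1.symm
      show (T.transfer p0.c.St1 : ℤ) ≤ p0.dep - t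
      rw [← hst]
      have harl : l.arr = a := rfl
      omega
  -- Part (4): arrival criterion
  · by_cases hz : qlast.c.Z2 = ((p0 :: pt).getLast (by simp)).c.Z2
    · exact Or.inl hz
    · refine Or.inr (Or.inr ?_)
      intro t ht
      rw [ndep] at ht
      obtain ⟨r, hr, hrt⟩ := Option.map_eq_some_iff.mp ht
      have hr0 : (0:ℤ) ≤ r := by
        rcases h : T.resA (⟨q0 :: qt, Qne⟩ : Conn T).Z2 with _ | n
        · rw [h] at hr; simp at hr
        · rw [h] at hr; simp at hr; omega
      have htq : t = qlast.arr + r := hrt.symm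
      have ht0 : 0 ≤ t := by omega
      have hm0 : 0 ≤ t % 1440 := Int.emod_nonneg t (by norm_num)
      have hm1 : t % 1440 < 1440 := Int.emod_lt_of_pos t (by norm_num)
      set e : EC T := ⟨qlast.c.Z2, qlast.c.Z2, qlast.c.St2, qlast.c.St2,
        (t % 1440).toNat, (t % 1440).toNat, by omega, by omega⟩ with he
      have hlen : e.len = 0 := by
        simp only [EC.len, cycleDiff, he, Nat.add_sub_cancel_left, Nat.mod_self]
      set l : Leg T := ⟨e, t, t⟩ with hl
      have hlok : LegOK l := by
        refine ⟨ht0, ?_, ?_⟩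
        · show t % 1440 = ((t % 1440).toNat : ℤ)
          omega
        · show t = t + (e.len : ℤ)
          rw [hlen]; simp
      have hta : qlast.arr ≤ t := by omega
      have hconsQ : Consistent T (replaced T [] [l] ⟨q0 :: qt, Qne⟩) := by
        constructor
        · intro x hx
          simp only [replaced, List.nil_append, List.mem_append, List.mem_cons,
            List.mem_singleton] at hx
          rcases hx with h | h
          · exact hQ.1 x (by simp [h])
          · rcases h with h | h
            · exact h ▸ hlok
            · simp at h
        · have hch : (replaced T [] [l] ⟨q0 :: qt, Qne⟩).legs = (q0 :: qt) ++ [l] := by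
            simp [replaced]
          rw [hch, List.Chain', List.isChain_append]
          refine ⟨hQ.2, List.isChain_singleton l, ?_⟩
          intro x hx y hy
          rw [List.getLast?_eq_getLast (l := q0 :: qt) (by simp)] at hx
          simp only [List.head?_cons, Option.mem_some_iff] at hx hy
          subst hx; subst hy
          exact ⟨rfl, fun _ => hta, fun h => absurd rfl h⟩
      obtain ⟨hconsP, -, -, -⟩ := hrep [] [l] hconsQ
      set plast : Leg T := (p0 :: pt).getLast (by simp) with hplast
      have hch : List.Chain' (AdjOK T) ((p0 :: pt) ++ [l]) := by
        have := hconsP.2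
        simpa [replaced] using this
      have hadj : AdjOK T plast l := by
        obtain ⟨-, -, h3⟩ := List.isChain_append.mp hch
        exact h3 plast (by rw [List.getLast?_eq_getLast (l := p0 :: pt) (by simp)]; exact rfl) l (by simp)
      have hne : l.c.Z1 ≠ plast.c.Z2 := hz
      have hkey : plast.arr + (T.transfer plast.c.St2 : ℤ) ≤ l.dep := hadj.2.2 hne
      show (T.transfer plast.c.St2 : ℤ) ≤ t - plast.arr
      have hld : l.dep = t := rfl
      omega
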